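/- Let J be a finite set of real numbers and let I be a set of nonnegative real numbers satisfying the descending chain condition. Then the set I₁ := {i ∈ I | there exist positive integers m, k and f ∈ I^+ with (m − 1 + k·i + f)/m ∈ J ∩ [0,1]} is finite. -/

import Mathlib

/-- A set of reals satisfies the descending chain condition if it contains
no infinite strictly decreasing sequence. -/
def DCC (S : Set ℝ) : Prop := ¬ ∃ f : ℕ → ℝ, (∀ n, f n ∈ S) ∧ StrictAnti f

/-- A set of reals satisfies the ascending chain condition if it contains
no infinite strictly increasing sequence. -/
def ACC (S : Set ℝ) : Prop := ¬ ∃ f : ℕ → ℝ, (∀ n, f n ∈ S) ∧ StrictMono f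

/-- `I⁺ = {0} ∪ {x ∈ [0,1] | x is a finite (nonempty) sum of elements of I}`. -/
def plusSet (I : Set ℝ) : Set ℝ :=
  {0} ∪ {x | 0 ≤ x ∧ x ≤ 1 ∧ ∃ l : List ℝ, l ≠ [] ∧ (∀ j ∈ l, j ∈ I) ∧ l.sum = x}

/-- `D(I) = {a ≤ 1 | a = (m - 1 + f)/m, m ∈ ℤ_{>0}, f ∈ I⁺}`. -/
def DSet (I : Set ℝ) : Set ℝ :=
  {a | a ≤ 1 ∧ ∃ m : ℕ, 0 < m ∧ ∃ f ∈ plusSet I, a = ((m : ℝ) - 1 + f) / m}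

/-- `D_d(I) = {a ≤ 1 | a = (m - 1 + f + k·d)/m, k, m ∈ ℤ_{>0}, f ∈ I⁺}`. -/
def DdSet (d : ℝ) (I : Set ℝ) : Set ℝ :=
  {a | a ≤ 1 ∧ ∃ k m : ℕ, 0 < k ∧ 0 < m ∧ ∃ f ∈ plusSet I,
    a = ((m : ℝ) - 1 + f + (k : ℝ) * d) / m}

lemma plusSet_nonneg {I : Set ℝ} {f : ℝ} (hf : f ∈ plusSet I) : 0 ≤ f := by
  rcases hf with h | h
  · simp_all
  · exact h.1

lemma plusSet_subset_closure (I : Set ℝ) :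
    plusSet I ⊆ (AddSubmonoid.closure I : Set ℝ) := by
  rintro x (h | ⟨-, -, l, -, hl, rfl⟩)
  · simp only [Set.mem_singleton_iff] at h
    subst h
    exact zero_mem _
  · exact list_sum_mem fun y hy => AddSubmonoid.subset_closure (hl y hy)

lemma plusSet_isWF {I : Set ℝ} (hI : ∀ x ∈ I, 0 ≤ x) (hWF : I.IsWF) :
    (plusSet I).IsWF :=
  ((hWF.isPWO.addSubmonoid_closure hI).isWF).mono (plusSet_subset_closure I)

lemma aux_pigeon {β : Type*} {T : Set ℕ} (hT : T.Infinite) {φ : ℕ → β}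
    (hfin : (φ '' T).Finite) : ∃ b, (T ∩ φ ⁻¹' {b}).Infinite := by
  by_contra h
  push_neg at h
  refine hT ((hfin.biUnion (fun b _ => h b)).subset ?_)
  intro n hn
  exact Set.mem_biUnion ⟨n, hn, rfl⟩ ⟨hn, rfl⟩

lemma aux_min_contra {I : Set ℝ} (hWF : (plusSet I).IsWF) {T : Set ℕ} (hT : T.Infinite)
    {j : ℕ → ℝ} (hj : StrictMono j) {f : ℕ → ℝ} (hfP : ∀ n, f n ∈ plusSet I)
    (C : ℝ) (k₀ : ℕ) (hk₀ : 0 < k₀) (hfe : ∀ n ∈ T, f n = C - (k₀ : ℝ) * j n) : False := by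
  have hFWF : (f '' T).IsWF := hWF.mono (by rintro x ⟨n, -, rfl⟩; exact hfP n)
  have hFne : (f '' T).Nonempty := (hT.nonempty).image f
  obtain ⟨n₀, hn₀T, hn₀⟩ := hFWF.min_mem hFne
  obtain ⟨n₁, hn₁T, hn₁⟩ := hT.exists_gt n₀
  refine hFWF.not_lt_min hFne (Set.mem_image_of_mem f hn₁T) ?_
  rw [← hn₀, hfe n₀ hn₀T, hfe n₁ hn₁T]
  have : (k₀ : ℝ) * j n₀ < (k₀ : ℝ) * j n₁ := by
    have : (0:ℝ) < (k₀ : ℝ) := by exact_mod_cast hk₀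
    exact mul_lt_mul_of_pos_left (hj hn₁) this
  linarith

theorem finite_to_finite (I J : Set ℝ) (hI : ∀ x ∈ I, 0 ≤ x) (hDCC : DCC I)
    (hJ : J.Finite) :
    Set.Finite {i ∈ I | ∃ m k : ℕ, 0 < m ∧ 0 < k ∧ ∃ f ∈ plusSet I,
      ((m : ℝ) - 1 + (k : ℝ) * i + f) / m ∈ J ∩ Set.Icc (0:ℝ) 1} := by
  set S := {i ∈ I | ∃ m k : ℕ, 0 < m ∧ 0 < k ∧ ∃ f ∈ plusSet I,
      ((m : ℝ) - 1 + (k : ℝ) * i + f) / m ∈ J ∩ Set.Icc (0:ℝ) 1} with hSdef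
  by_contra hfin
  have hinf : S.Infinite := hfin
  -- I is well-founded
  have hWF : I.IsWF := by
    rw [Set.isWF_iff_no_descending_seq]
    intro f hf hmem
    exact hDCC ⟨f, hmem, hf⟩
  have hplusWF : (plusSet I).IsWF := plusSet_isWF hI hWF
  -- extract a strictly increasing sequence in S
  have hSsub : S ⊆ I := fun x hx => hx.1
  obtain ⟨g, hmono⟩ := (hWF.isPWO.mono hSsub).exists_monotone_subseq
    (f := fun n => (hinf.natEmbedding S n : ℝ)) (fun n => (hinf.natEmbedding S n).2)
  set i : ℕ → ℝ := (fun n => ((hinf.natEmbedding S n) : ℝ)) ∘ g with hidef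
  have hinj : Function.Injective i := by
    intro p q hpq
    exact g.injective ((hinf.natEmbedding S).injective (Subtype.ext hpq))
  have hi : StrictMono i := hmono.strictMono_of_injective hinj
  have hiS : ∀ n, i n ∈ S := fun n => (hinf.natEmbedding S (g n)).2
  -- shift so all values are positive
  set j : ℕ → ℝ := fun n => i (n + 1) with hjdef
  have hjS : ∀ n, j n ∈ S := fun n => hiS (n + 1)
  have hjmono : StrictMono j := fun p q hpq => hi (by omega)
  have hjpos : ∀ n, 0 < j n := by
    intro n
    have h0 : 0 ≤ i 0 := hI _ (hSsub (hiS 0))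
    have : i 0 < i (n + 1) := hi (Nat.succ_pos n)
    linarith
  -- choose witnesses
  have hw : ∀ n, ∃ m k : ℕ, 0 < m ∧ 0 < k ∧ ∃ f ∈ plusSet I,
      ((m : ℝ) - 1 + (k : ℝ) * j n + f) / m ∈ J ∩ Set.Icc (0:ℝ) 1 := fun n => (hjS n).2
  choose m k hm hk f hfP hfJ using hw
  set A : ℕ → ℝ := fun n => ((m n : ℝ) - 1 + (k n : ℝ) * j n + f n) / (m n) with hAdef
  have hAJ : ∀ n, A n ∈ J := fun n => (hfJ n).1
  have hm0 : ∀ n, (0:ℝ) < (m n : ℝ) := fun n => by exact_mod_cast hm n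
  have hnum : ∀ n, (m n : ℝ) - 1 + (k n : ℝ) * j n + f n = (m n : ℝ) * A n := by
    intro n
    have h : (m n : ℝ) ≠ 0 := (hm0 n).ne'
    rw [hAdef]
    field_simp
  have hfnn : ∀ n, 0 ≤ f n := fun n => plusSet_nonneg (hfP n)
  have hA1 : ∀ n, A n ≤ 1 := fun n => ((hfJ n).2).2
  have hkj : ∀ n, (k n : ℝ) * j n + f n ≤ 1 := by
    intro n
    have h1 := hnum n
    have h2 : (m n : ℝ) * A n ≤ (m n : ℝ) * 1 :=
      mul_le_mul_of_nonneg_left (hA1 n) (le_of_lt (hm0 n))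
    nlinarith
  -- bound on k
  have hkb : ∀ n, (k n : ℝ) ≤ 1 / j 0 := by
    intro n
    have h1 : (k n : ℝ) * j 0 ≤ (k n : ℝ) * j n := by
      apply mul_le_mul_of_nonneg_left (hjmono.monotone (Nat.zero_le n)) (by positivity)
    have h2 : (k n : ℝ) * j n ≤ 1 := by nlinarith [hfnn n, hkj n]
    have h3 : (0:ℝ) < j 0 := hjpos 0
    rw [le_div_iff₀ h3]
    nlinarith
  have hkK : ∀ n, k n ≤ ⌈(1:ℝ) / j 0⌉₊ := by
    intro n
    have := (hkb n).trans (Nat.le_ceil _)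
    exact_mod_cast this
  -- first pigeonhole: fix (A n, k n)
  obtain ⟨⟨a, k₀⟩, hT⟩ := aux_pigeon (Set.infinite_univ (α := ℕ))
    (φ := fun n => (A n, k n))
    (Set.Finite.subset (hJ.prod (Set.finite_Iic ⌈(1:ℝ) / j 0⌉₊)) (by
      rintro ⟨x, y⟩ ⟨n, -, hn⟩
      obtain ⟨h1, h2⟩ := Prod.mk.injEq .. ▸ hn
      exact ⟨h1 ▸ hAJ n, h2 ▸ hkK n⟩))
  set T := (Set.univ ∩ (fun n => (A n, k n)) ⁻¹' {(a, k₀)}) with hTdef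
  have hTA : ∀ n ∈ T, A n = a := fun n hn => congrArg Prod.fst hn.2
  have hTk : ∀ n ∈ T, k n = k₀ := fun n hn => congrArg Prod.snd hn.2
  obtain ⟨n₂, hn₂⟩ := hT.nonempty
  have hk₀ : 0 < k₀ := hTk n₂ hn₂ ▸ hk n₂
  have ha1 : a ≤ 1 := hTA n₂ hn₂ ▸ hA1 n₂
  -- in T : f n = 1 - (m n)(1-a) - k₀ * j n
  have hfeq : ∀ n ∈ T, f n = 1 - (m n : ℝ) * (1 - a) - (k₀ : ℝ) * j n := by
    intro n hn
    have h1 := hnum n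
    rw [hTA n hn, hTk n hn] at *
    have := hnum n
    rw [hTA n hn] at this
    rw [hTk n hn] at this
    nlinarith
  rcases eq_or_lt_of_le ha1 with ha | ha
  · -- a = 1
    refine aux_min_contra hplusWF hT hjmono hfP 1 k₀ hk₀ ?_
    intro n hn
    have := hfeq n hn
    rw [← ha] at this
    linarith [this]
  · -- a < 1 : bound m on T, second pigeonhole
    have hmb : ∀ n ∈ T, m n ≤ ⌈(1:ℝ) / (1 - a)⌉₊ := by
      intro n hn
      have h1 := hfeq n hn
      have h2 : (m n : ℝ) * (1 - a) ≤ 1 := by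
        have hjn := hjpos n
        have hk0' : (0:ℝ) ≤ (k₀ : ℝ) := by positivity
        nlinarith [hfnn n]
      have h3 : (m n : ℝ) ≤ 1 / (1 - a) := by
        rw [le_div_iff₀ (by linarith)]
        linarith
      have := h3.trans (Nat.le_ceil _)
      exact_mod_cast this
    obtain ⟨m₀, hT₂⟩ := aux_pigeon (hT) (φ := m)
      (Set.Finite.subset (Set.finite_Iic ⌈(1:ℝ) / (1 - a)⌉₊) (by
        rintro x ⟨n, hn, rfl⟩
        exact hmb n hn))
    refine aux_min_contra hplusWF hT₂ hjmono hfP (1 - (m₀ : ℝ) * (1 - a)) k₀ hk₀ ?_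
    intro n hn
    have h1 := hfeq n hn.1
    have h2 : m n = m₀ := hn.2
    rw [h2] at h1
    linarith
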